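/- Under the same hypotheses as the CUR error bounds (A = B + C, orthogonal [Q₁ᴸ, Q₂ᴸ] and [Q₁ᵁ, Q₂ᵁ], (Q₂ᴸ)ᵀA = (Q₂ᴸ)ᵀC, AQ₂ᵁ = CQ₂ᵁ), if σⱼ(A)² > 2‖C‖₂², then σⱼ(Q₁ᴸ(Q₁ᴸ)ᵀAQ₁ᵁ(Q₁ᵁ)ᵀ) ≥ √(σⱼ(A)² − 2‖C‖₂²). Equivalently, σⱼ(A) ≤ σⱼ((Q₁ᴸ)ᵀAQ₁ᵁ)·√(1 + 2(‖C‖₂/σⱼ((Q₁ᴸ)ᵀAQ₁ᵁ))²). -/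

import Mathlib

set_option linter.unusedSectionVars false
set_option linter.unusedVariables false
set_option maxHeartbeats 1000000



open Matrix
noncomputable def specNorm {m n : Type*} [Fintype m] [Fintype n] [DecidableEq n]
    (A : Matrix m n ℝ) : ℝ :=
  ‖LinearMap.toContinuousLinearMap (Matrix.toEuclideanLin A)‖

noncomputable def frobNorm {m n : Type*} [Fintype m] [Fintype n]
    (A : Matrix m n ℝ) : ℝ :=
  Real.sqrt (∑ i, ∑ j, (A i j) ^ 2)

/-- The `j`-th largest singular value of `A` (1-indexed), characterized as the
distance in spectral norm from `A` to the set of matrices of rank `< j`. -/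
noncomputable def sval {m n : Type*} [Fintype m] [Fintype n] [DecidableEq n]
    (A : Matrix m n ℝ) (j : ℕ) : ℝ :=
  sInf { c | ∃ B : Matrix m n ℝ, B.rank < j ∧ specNorm (A - B) = c }


section Helpers

variable {m n p : Type*} [Fintype m] [Fintype n] [Fintype p]

lemma specNorm_nonneg [DecidableEq n] (A : Matrix m n ℝ) : 0 ≤ specNorm A :=
  norm_nonneg _

lemma specNorm_apply_le [DecidableEq n] (A : Matrix m n ℝ) (v : EuclideanSpace ℝ n) :
    ‖Matrix.toEuclideanLin A v‖ ≤ specNorm A * ‖v‖ :=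
  (LinearMap.toContinuousLinearMap (Matrix.toEuclideanLin A)).le_opNorm v

lemma specNorm_le_bound [DecidableEq n] (A : Matrix m n ℝ) {c : ℝ} (hc : 0 ≤ c)
    (h : ∀ v : EuclideanSpace ℝ n, ‖Matrix.toEuclideanLin A v‖ ≤ c * ‖v‖) : specNorm A ≤ c :=
  ContinuousLinearMap.opNorm_le_bound _ hc h

lemma toEuclideanLin_mul_apply [DecidableEq n] [DecidableEq p] (A : Matrix m n ℝ)
    (B : Matrix n p ℝ) (v : EuclideanSpace ℝ p) :
    Matrix.toEuclideanLin (A * B) v = Matrix.toEuclideanLin A (Matrix.toEuclideanLin B v) := by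
  simp [Matrix.toEuclideanLin_apply, Matrix.mulVec_mulVec]

lemma specNorm_mul_le [DecidableEq n] [DecidableEq p] (A : Matrix m n ℝ) (B : Matrix n p ℝ) :
    specNorm (A * B) ≤ specNorm A * specNorm B := by
  refine specNorm_le_bound _ (mul_nonneg (specNorm_nonneg A) (specNorm_nonneg B)) fun v => ?_
  rw [toEuclideanLin_mul_apply]
  calc ‖Matrix.toEuclideanLin A (Matrix.toEuclideanLin B v)‖
      ≤ specNorm A * ‖Matrix.toEuclideanLin B v‖ := specNorm_apply_le _ _
    _ ≤ specNorm A * (specNorm B * ‖v‖) :=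
        mul_le_mul_of_nonneg_left (specNorm_apply_le _ _) (specNorm_nonneg A)
    _ = specNorm A * specNorm B * ‖v‖ := by ring

lemma inner_toEuclideanLin [DecidableEq m] [DecidableEq n] (X : Matrix m n ℝ) (v : EuclideanSpace ℝ n)
    (u : EuclideanSpace ℝ m) :
    inner ℝ (Matrix.toEuclideanLin X v) u = (inner ℝ v (Matrix.toEuclideanLin Xᵀ u) : ℝ) := by
  simp only [PiLp.inner_apply, Matrix.toEuclideanLin_apply, RCLike.inner_apply, conj_trivial]
  simp only [PiLp.toLp_apply, Matrix.mulVec,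
    dotProduct, Matrix.transpose_apply, Finset.sum_mul, Finset.mul_sum]
  rw [Finset.sum_comm]
  exact Finset.sum_congr rfl fun i _ => Finset.sum_congr rfl fun j _ => by ring


lemma inner_eq_zero_of_orth [DecidableEq m] [DecidableEq n] (X Y : Matrix m n ℝ)
    (h : Xᵀ * Y = 0) (v w : EuclideanSpace ℝ n) :
    (inner ℝ (Matrix.toEuclideanLin X v) (Matrix.toEuclideanLin Y w) : ℝ) = 0 := by
  rw [inner_toEuclideanLin, ← toEuclideanLin_mul_apply, h]
  simp

lemma norm_apply_sq_add_of_orth [DecidableEq m] [DecidableEq n] (X Y : Matrix m n ℝ)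
    (h : Xᵀ * Y = 0) (v : EuclideanSpace ℝ n) :
    ‖Matrix.toEuclideanLin (X + Y) v‖ ^ 2 =
      ‖Matrix.toEuclideanLin X v‖ ^ 2 + ‖Matrix.toEuclideanLin Y v‖ ^ 2 := by
  have hadd : Matrix.toEuclideanLin (X + Y) v
      = Matrix.toEuclideanLin X v + Matrix.toEuclideanLin Y v := by
    rw [map_add]; rfl
  rw [hadd, norm_add_sq_real, inner_eq_zero_of_orth X Y h v v]
  ring

lemma norm_apply_eq_of_isometry [DecidableEq m] [DecidableEq n] (Q : Matrix m n ℝ)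
    (h : Qᵀ * Q = 1) (v : EuclideanSpace ℝ n) :
    ‖Matrix.toEuclideanLin Q v‖ = ‖v‖ := by
  have h1 : ‖Matrix.toEuclideanLin Q v‖ ^ 2 = ‖v‖ ^ 2 := by
    rw [← real_inner_self_eq_norm_sq, ← real_inner_self_eq_norm_sq,
      inner_toEuclideanLin, ← toEuclideanLin_mul_apply, h]
    congr 1
    simp [Matrix.toEuclideanLin_apply]
  rw [← Real.sqrt_sq (norm_nonneg (Matrix.toEuclideanLin Q v)), h1,
    Real.sqrt_sq (norm_nonneg v)]

lemma specNorm_le_one_of_isometry [DecidableEq m] [DecidableEq n] (Q : Matrix m n ℝ)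
    (h : Qᵀ * Q = 1) : specNorm Q ≤ 1 := by
  refine specNorm_le_bound _ zero_le_one fun v => ?_
  rw [norm_apply_eq_of_isometry Q h, one_mul]

lemma specNorm_transpose_le [DecidableEq m] [DecidableEq n] (A : Matrix m n ℝ) :
    specNorm Aᵀ ≤ specNorm A := by
  refine specNorm_le_bound _ (specNorm_nonneg A) fun w => ?_
  rcases eq_or_lt_of_le (norm_nonneg (Matrix.toEuclideanLin Aᵀ w)) with h0 | h0
  · rw [← h0]; exact mul_nonneg (specNorm_nonneg A) (norm_nonneg w)
  · have key : ‖Matrix.toEuclideanLin Aᵀ w‖ ^ 2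
        ≤ (specNorm A * ‖w‖) * ‖Matrix.toEuclideanLin Aᵀ w‖ := by
      rw [← real_inner_self_eq_norm_sq, inner_toEuclideanLin, Matrix.transpose_transpose]
      calc (inner ℝ w (Matrix.toEuclideanLin A (Matrix.toEuclideanLin Aᵀ w)) : ℝ)
          ≤ ‖w‖ * ‖Matrix.toEuclideanLin A (Matrix.toEuclideanLin Aᵀ w)‖ :=
            real_inner_le_norm _ _
        _ ≤ ‖w‖ * (specNorm A * ‖Matrix.toEuclideanLin Aᵀ w‖) :=
            mul_le_mul_of_nonneg_left (specNorm_apply_le _ _) (norm_nonneg w)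
        _ = (specNorm A * ‖w‖) * ‖Matrix.toEuclideanLin Aᵀ w‖ := by ring
    nlinarith [key, h0]

lemma specNorm_transpose [DecidableEq m] [DecidableEq n] (A : Matrix m n ℝ) :
    specNorm Aᵀ = specNorm A := by
  refine le_antisymm (specNorm_transpose_le A) ?_
  have := specNorm_transpose_le Aᵀ
  rwa [Matrix.transpose_transpose] at this

end Helpers


section Sval

variable {m n : Type*} [Fintype m] [Fintype n] [DecidableEq m] [DecidableEq n]

lemma svalSet_nonempty (A : Matrix m n ℝ) {j : ℕ} (hj : 1 ≤ j) :
    {c | ∃ B : Matrix m n ℝ, B.rank < j ∧ specNorm (A - B) = c}.Nonempty :=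
  ⟨specNorm (A - 0), 0, by simp only [Matrix.rank_zero]; omega, rfl⟩

lemma svalSet_bddBelow (A : Matrix m n ℝ) (j : ℕ) :
    BddBelow {c | ∃ B : Matrix m n ℝ, B.rank < j ∧ specNorm (A - B) = c} :=
  ⟨0, by rintro c ⟨B, -, rfl⟩; exact specNorm_nonneg _⟩

lemma sval_nonneg (A : Matrix m n ℝ) (j : ℕ) : 0 ≤ sval A j :=
  Real.sInf_nonneg (by rintro c ⟨B, -, rfl⟩; exact specNorm_nonneg _)

lemma sval_le (A : Matrix m n ℝ) {j : ℕ} {B : Matrix m n ℝ} (h : B.rank < j) :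
    sval A j ≤ specNorm (A - B) :=
  csInf_le (svalSet_bddBelow A j) ⟨B, h, rfl⟩

lemma sval_transpose (A : Matrix m n ℝ) (j : ℕ) : sval Aᵀ j = sval A j := by
  unfold sval
  congr 1
  ext c
  constructor
  · rintro ⟨B, hB, rfl⟩
    refine ⟨Bᵀ, by rwa [Matrix.rank_transpose], ?_⟩
    rw [← specNorm_transpose (A - Bᵀ), Matrix.transpose_sub, Matrix.transpose_transpose]
  · rintro ⟨B, hB, rfl⟩
    refine ⟨Bᵀ, by rwa [Matrix.rank_transpose], ?_⟩
    rw [← Matrix.transpose_sub, specNorm_transpose]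

lemma sval_add_sq_le (X Y : Matrix m n ℝ) (P : Matrix m m ℝ)
    (hPsymm : Pᵀ = P) (hPX : P * X = X) (hPY : P * Y = 0) (hPn : specNorm P ≤ 1)
    {j : ℕ} (hj : 1 ≤ j) :
    sval (X + Y) j ^ 2 ≤ sval X j ^ 2 + specNorm Y ^ 2 := by
  set s := sval X j with hs
  set c := specNorm Y with hc
  have hs0 : 0 ≤ s := sval_nonneg X j
  have hc0 : 0 ≤ c := specNorm_nonneg Y
  have key : ∀ ε : ℝ, 0 < ε → sval (X + Y) j ≤ Real.sqrt ((s + ε) ^ 2 + c ^ 2) := by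
    intro ε hε
    have hne := svalSet_nonempty X hj
    have hbdd := svalSet_bddBelow X j
    have h' : sval X j < s + ε := lt_add_of_pos_right _ hε
    rw [sval] at h'
    obtain ⟨d, ⟨B, hBr, hBd⟩, hdlt⟩ := (csInf_lt_iff hbdd hne).mp h'
    rw [← hBd] at hdlt
    set B' := P * B with hB'
    have hrank : B'.rank < j := lt_of_le_of_lt (Matrix.rank_mul_le_right P B) hBr
    have hXB' : X - B' = P * (X - B) := by rw [Matrix.mul_sub, hPX]
    have hnorm1 : specNorm (X - B') ≤ specNorm (X - B) := by
      rw [hXB']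
      calc specNorm (P * (X - B)) ≤ specNorm P * specNorm (X - B) := specNorm_mul_le _ _
        _ ≤ 1 * specNorm (X - B) := mul_le_mul_of_nonneg_right hPn (specNorm_nonneg _)
        _ = specNorm (X - B) := one_mul _
    have horth : (X - B')ᵀ * Y = 0 := by
      rw [hXB', Matrix.transpose_mul, hPsymm, Matrix.mul_assoc, hPY, Matrix.mul_zero]
    have hXYB' : X + Y - B' = (X - B') + Y := by abel
    have hbound : specNorm (X + Y - B') ≤ Real.sqrt (specNorm (X - B') ^ 2 + c ^ 2) := by
      refine specNorm_le_bound _ (Real.sqrt_nonneg _) fun v => ?_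
      have h2 : ‖Matrix.toEuclideanLin (X + Y - B') v‖ ^ 2
          ≤ (specNorm (X - B') ^ 2 + c ^ 2) * ‖v‖ ^ 2 := by
        rw [hXYB', norm_apply_sq_add_of_orth _ _ horth v]
        have e1 := specNorm_apply_le (X - B') v
        have e2 := specNorm_apply_le Y v
        nlinarith [norm_nonneg (Matrix.toEuclideanLin (X - B') v),
          norm_nonneg (Matrix.toEuclideanLin Y v), norm_nonneg v,
          specNorm_nonneg (X - B'), specNorm_nonneg Y]
      have h3 := Real.le_sqrt_of_sq_le h2
      rwa [Real.sqrt_mul (by positivity), Real.sqrt_sq (norm_nonneg v)] at h3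
    have h4 : sval (X + Y) j ≤ specNorm (X + Y - B') := sval_le _ hrank
    calc sval (X + Y) j ≤ Real.sqrt (specNorm (X - B') ^ 2 + c ^ 2) := h4.trans hbound
      _ ≤ Real.sqrt ((s + ε) ^ 2 + c ^ 2) := Real.sqrt_le_sqrt
          (by nlinarith [specNorm_nonneg (X - B'), specNorm_nonneg (X - B)])
  have hlim : sval (X + Y) j ≤ Real.sqrt (s ^ 2 + c ^ 2) := by
    have hcont : Filter.Tendsto (fun ε : ℝ => Real.sqrt ((s + ε) ^ 2 + c ^ 2))
        (nhdsWithin 0 (Set.Ioi 0)) (nhds (Real.sqrt (s ^ 2 + c ^ 2))) := by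
      have hc2 : Filter.Tendsto (fun ε : ℝ => Real.sqrt ((s + ε) ^ 2 + c ^ 2))
          (nhds 0) (nhds (Real.sqrt ((s + 0) ^ 2 + c ^ 2))) := by
        apply Continuous.tendsto
        fun_prop
      simpa using hc2.mono_left nhdsWithin_le_nhds
    refine ge_of_tendsto hcont ?_
    filter_upwards [self_mem_nhdsWithin] with ε hε
    exact key ε hε
  have h2 : sval (X + Y) j ^ 2 ≤ Real.sqrt (s ^ 2 + c ^ 2) ^ 2 :=
    pow_le_pow_left₀ (sval_nonneg _ _) hlim 2
  rwa [Real.sq_sqrt (by positivity)] at h2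

end Sval

section MoreHelpers

variable {m n p : Type*} [Fintype m] [Fintype n] [Fintype p]

lemma specNorm_mul_le_left [DecidableEq n] [DecidableEq p] {M : Matrix m n ℝ}
    (N : Matrix n p ℝ) (h : specNorm M ≤ 1) : specNorm (M * N) ≤ specNorm N :=
  le_trans (specNorm_mul_le _ _) (by nlinarith [specNorm_nonneg N, specNorm_nonneg M])

lemma specNorm_mul_le_right [DecidableEq n] [DecidableEq p] (M : Matrix m n ℝ)
    {N : Matrix n p ℝ} (h : specNorm N ≤ 1) : specNorm (M * N) ≤ specNorm M :=
  le_trans (specNorm_mul_le _ _) (by nlinarith [specNorm_nonneg N, specNorm_nonneg M])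

end MoreHelpers

/-- CUR spectral lower bound: if σⱼ(A)² > 2‖C‖₂² then
σⱼ(Q₁ᴸ(Q₁ᴸ)ᵀAQ₁ᵁ(Q₁ᵁ)ᵀ) ≥ √(σⱼ(A)² − 2‖C‖₂²). -/
theorem cur_singular_value_lower_bound {m n k m' n' : ℕ}
    (A B C : Matrix (Fin m) (Fin n) ℝ) (hABC : A = B + C)
    (Q1L : Matrix (Fin m) (Fin k) ℝ) (Q2L : Matrix (Fin m) (Fin m') ℝ)
    (Q1U : Matrix (Fin n) (Fin k) ℝ) (Q2U : Matrix (Fin n) (Fin n') ℝ)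
    (hL1 : fromCols Q1L Q2L * (fromCols Q1L Q2L)ᵀ = 1)
    (hL2 : (fromCols Q1L Q2L)ᵀ * fromCols Q1L Q2L = 1)
    (hU1 : fromCols Q1U Q2U * (fromCols Q1U Q2U)ᵀ = 1)
    (hU2 : (fromCols Q1U Q2U)ᵀ * fromCols Q1U Q2U = 1)
    (h2L : Q2Lᵀ * A = Q2Lᵀ * C)
    (h2U : A * Q2U = C * Q2U)
    (j : ℕ) (hj1 : 1 ≤ j)
    (hgap : 2 * specNorm C ^ 2 < sval A j ^ 2) :
    Real.sqrt (sval A j ^ 2 - 2 * specNorm C ^ 2) ≤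
      sval (Q1L * Q1Lᵀ * A * Q1U * Q1Uᵀ) j := by
  -- block identities
  rw [transpose_fromCols, fromCols_mul_fromRows] at hL1 hU1
  rw [transpose_fromCols, fromRows_mul_fromCols, ← fromBlocks_one] at hL2 hU2
  obtain ⟨h11L, h12L, h21L, h22L⟩ := fromBlocks_inj.mp hL2
  obtain ⟨h11U, h12U, h21U, h22U⟩ := fromBlocks_inj.mp hU2
  set P := Q1L * Q1Lᵀ with hPdef
  set Qp := Q1U * Q1Uᵀ with hQdef
  have hPsymm : Pᵀ = P := by rw [hPdef, Matrix.transpose_mul, Matrix.transpose_transpose]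
  have hQsymm : Qpᵀ = Qp := by rw [hQdef, Matrix.transpose_mul, Matrix.transpose_transpose]
  have hQ1Ln : specNorm Q1L ≤ 1 := specNorm_le_one_of_isometry _ h11L
  have hQ1LTn : specNorm Q1Lᵀ ≤ 1 := by rwa [specNorm_transpose]
  have hQ2Ln : specNorm Q2L ≤ 1 := specNorm_le_one_of_isometry _ h22L
  have hQ2LTn : specNorm Q2Lᵀ ≤ 1 := by rwa [specNorm_transpose]
  have hQ1Un : specNorm Q1U ≤ 1 := specNorm_le_one_of_isometry _ h11U
  have hQ1UTn : specNorm Q1Uᵀ ≤ 1 := by rwa [specNorm_transpose]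
  have hQ2Un : specNorm Q2U ≤ 1 := specNorm_le_one_of_isometry _ h22U
  have hQ2UTn : specNorm Q2Uᵀ ≤ 1 := by rwa [specNorm_transpose]
  have hPn : specNorm P ≤ 1 := le_trans (specNorm_mul_le_left _ hQ1Ln) hQ1LTn
  have hQpn : specNorm Qp ≤ 1 := le_trans (specNorm_mul_le_left _ hQ1Un) hQ1UTn
  have hPP : P * P = P := by
    calc Q1L * Q1Lᵀ * (Q1L * Q1Lᵀ) = Q1L * (Q1Lᵀ * Q1L) * Q1Lᵀ := by
          simp only [Matrix.mul_assoc]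
      _ = Q1L * Q1Lᵀ := by rw [h11L, Matrix.mul_one]
  have hQQ : Qp * Qp = Qp := by
    calc Q1U * Q1Uᵀ * (Q1U * Q1Uᵀ) = Q1U * (Q1Uᵀ * Q1U) * Q1Uᵀ := by
          simp only [Matrix.mul_assoc]
      _ = Q1U * Q1Uᵀ := by rw [h11U, Matrix.mul_one]
  set c := specNorm C with hcdef
  have hc0 : 0 ≤ c := specNorm_nonneg C
  -- Step 1 : column split
  set X1 := P * A with hX1
  set Y1 := Q2L * (Q2Lᵀ * A) with hY1
  have hsum1 : X1 + Y1 = A := by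
    rw [hX1, hY1, ← Matrix.mul_assoc Q2L, ← Matrix.add_mul, hL1, Matrix.one_mul]
  have hPX1 : P * X1 = X1 := by rw [hX1, ← Matrix.mul_assoc, hPP]
  have hPY1 : P * Y1 = 0 := by
    rw [hY1, hPdef]
    calc Q1L * Q1Lᵀ * (Q2L * (Q2Lᵀ * A)) = Q1L * ((Q1Lᵀ * Q2L) * (Q2Lᵀ * A)) := by
          simp only [Matrix.mul_assoc]
      _ = 0 := by rw [h12L, Matrix.zero_mul, Matrix.mul_zero]
  have hY1C : specNorm Y1 ≤ c := by
    rw [hY1, h2L]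
    exact le_trans (specNorm_mul_le_left _ hQ2Ln) (specNorm_mul_le_left _ hQ2LTn)
  have step1 : sval A j ^ 2 ≤ sval X1 j ^ 2 + specNorm Y1 ^ 2 := by
    have := sval_add_sq_le X1 Y1 P hPsymm hPX1 hPY1 hPn hj1
    rwa [hsum1] at this
  -- Step 2 : row split, via transposes
  set M := Aᵀ * P with hM
  set X2 := Qp * M with hX2
  set Y2 := Q2U * (Q2Uᵀ * M) with hY2
  have hsum2 : X2 + Y2 = M := by
    rw [hX2, hY2, ← Matrix.mul_assoc Q2U, ← Matrix.add_mul, hU1, Matrix.one_mul]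
  have hQX2 : Qp * X2 = X2 := by rw [hX2, ← Matrix.mul_assoc, hQQ]
  have hQY2 : Qp * Y2 = 0 := by
    rw [hY2, hQdef]
    calc Q1U * Q1Uᵀ * (Q2U * (Q2Uᵀ * M)) = Q1U * ((Q1Uᵀ * Q2U) * (Q2Uᵀ * M)) := by
          simp only [Matrix.mul_assoc]
      _ = 0 := by rw [h12U, Matrix.zero_mul, Matrix.mul_zero]
  have hQ2UM : Q2Uᵀ * M = Q2Uᵀ * (Cᵀ * P) := by
    rw [hM, ← Matrix.mul_assoc, ← Matrix.transpose_mul, h2U, Matrix.transpose_mul,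
      Matrix.mul_assoc]
  have hY2C : specNorm Y2 ≤ c := by
    rw [hY2, hQ2UM]
    refine le_trans (specNorm_mul_le_left _ hQ2Un) ?_
    refine le_trans (specNorm_mul_le_left _ hQ2UTn) ?_
    refine le_trans (specNorm_mul_le_right _ hPn) ?_
    rw [specNorm_transpose]
  have step2 : sval M j ^ 2 ≤ sval X2 j ^ 2 + specNorm Y2 ^ 2 := by
    have := sval_add_sq_le X2 Y2 Qp hQsymm hQX2 hQY2 hQpn hj1
    rwa [hsum2] at this
  -- identify svals through transposes
  have hMX1 : sval M j = sval X1 j := by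
    have h1 : Mᵀ = X1 := by rw [hM, Matrix.transpose_mul, Matrix.transpose_transpose, hPsymm]
    rw [← sval_transpose M j, h1]
  have hX2T : sval X2 j = sval (P * A * Qp) j := by
    have h1 : X2ᵀ = P * A * Qp := by
      rw [hX2, Matrix.transpose_mul, hQsymm, hM, Matrix.transpose_mul,
        Matrix.transpose_transpose, hPsymm]
    rw [← sval_transpose X2 j, h1]
  -- combine
  have hcomb : sval A j ^ 2 - 2 * c ^ 2 ≤ sval (P * A * Qp) j ^ 2 := by
    have hY1sq : specNorm Y1 ^ 2 ≤ c ^ 2 := by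
      nlinarith [specNorm_nonneg Y1]
    have hY2sq : specNorm Y2 ^ 2 ≤ c ^ 2 := by
      nlinarith [specNorm_nonneg Y2]
    rw [hMX1] at step2
    rw [hX2T] at step2
    linarith [step1, step2, hY1sq, hY2sq]
  have hgoal : P * A * Q1U * Q1Uᵀ = P * A * Qp := by
    rw [hQdef, Matrix.mul_assoc]
  show Real.sqrt (sval A j ^ 2 - 2 * c ^ 2) ≤ sval (P * A * Q1U * Q1Uᵀ) j
  rw [hgoal]
  calc Real.sqrt (sval A j ^ 2 - 2 * c ^ 2) ≤ Real.sqrt (sval (P * A * Qp) j ^ 2) :=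
        Real.sqrt_le_sqrt hcomb
    _ = sval (P * A * Qp) j := Real.sqrt_sq (sval_nonneg _ _)
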